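/- Let G be an algebraic group acting linearly on finite-dimensional spaces W, V over an algebraically closed field k, and let v = (w, v₁, …, v_m) ∈ W ⊕ V^m. Suppose for some q ≤ m that Span_k{v₁, …, v_q} = Span_k{v₁, …, v_m}. Then the G-orbit of v is Zariski-closed in W ⊕ V^m if and only if the G-orbit of (w, v₁, …, v_q) is Zariski-closed in W ⊕ V^q. -/
import Mathlib

open scoped Pointwise

/-- A function `f : U → k` is a polynomial function if it lies in the `k`-subalgebra of
`U → k` generated by the linear functionals on `U`. -/
def IsPolyFun (k : Type) [Field k] {U : Type} [AddCommGroup U] [Module k U]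
    (f : U → k) : Prop :=
  f ∈ Algebra.adjoin k (Set.range fun φ : U →ₗ[k] k => ⇑φ)

/-- A subset of a finite-dimensional `k`-vector space is Zariski closed if it is the
common zero locus of a family of polynomial functions. -/
def ZarClosed (k : Type) [Field k] {U : Type} [AddCommGroup U] [Module k U]
    (S : Set U) : Prop :=
  ∃ T : Set (U → k), (∀ f ∈ T, IsPolyFun k f) ∧ S = {x | ∀ f ∈ T, f x = 0}

/-- Pullback of a polynomial function along a linear map is polynomial. -/
theorem IsPolyFun.comp_linear {k : Type} [Field k] {U U' : Type}
    [AddCommGroup U] [Module k U] [AddCommGroup U'] [Module k U']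
    {f : U' → k} (hf : IsPolyFun k f) (L : U →ₗ[k] U') :
    IsPolyFun k (f ∘ ⇑L) := by
  unfold IsPolyFun at hf ⊢
  induction hf using Algebra.adjoin_induction with
  | mem g hg =>
    obtain ⟨φ, rfl⟩ := hg
    exact Algebra.subset_adjoin ⟨φ.comp L, rfl⟩
  | algebraMap r =>
    have : (algebraMap k (U' → k) r) ∘ ⇑L = algebraMap k (U → k) r := by
      funext x; rfl
    rw [this]; exact Subalgebra.algebraMap_mem _ r
  | add x y hx hy ihx ihy =>
    have : (x + y) ∘ ⇑L = x ∘ ⇑L + y ∘ ⇑L := by funext z; rfl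
    rw [this]; exact add_mem ihx ihy
  | mul x y hx hy ihx ihy =>
    have : (x * y) ∘ ⇑L = (x ∘ ⇑L) * (y ∘ ⇑L) := by funext z; rfl
    rw [this]; exact mul_mem ihx ihy

/-- Preimage of a Zariski closed set under a linear map is Zariski closed. -/
theorem ZarClosed.preimage_linear {k : Type} [Field k] {U U' : Type}
    [AddCommGroup U] [Module k U] [AddCommGroup U'] [Module k U']
    {S : Set U'} (hS : ZarClosed k S) (L : U →ₗ[k] U') :
    ZarClosed k (⇑L ⁻¹' S) := by
  obtain ⟨T, hT, rfl⟩ := hS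
  refine ⟨(fun f => f ∘ ⇑L) '' T, ?_, ?_⟩
  · rintro _ ⟨f, hf, rfl⟩
    exact (hT f hf).comp_linear L
  · ext x
    simp [Set.mem_preimage]

theorem ZarClosed.inter {k : Type} [Field k] {U : Type}
    [AddCommGroup U] [Module k U] {S S' : Set U}
    (hS : ZarClosed k S) (hS' : ZarClosed k S') : ZarClosed k (S ∩ S') := by
  obtain ⟨T, hT, rfl⟩ := hS
  obtain ⟨T', hT', rfl⟩ := hS'
  refine ⟨T ∪ T', ?_, ?_⟩
  · rintro f (hf | hf)
    exacts [hT f hf, hT' f hf]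
  · ext x
    simp only [Set.mem_inter_iff, Set.mem_setOf_eq, Set.mem_union]
    constructor
    · rintro ⟨h1, h2⟩ f (hf | hf)
      exacts [h1 f hf, h2 f hf]
    · intro h
      exact ⟨fun f hf => h f (Or.inl hf), fun f hf => h f (Or.inr hf)⟩

theorem ZarClosed.singleton_zero {k : Type} [Field k] {U : Type}
    [AddCommGroup U] [Module k U] : ZarClosed k ({0} : Set U) := by
  refine ⟨Set.range fun φ : U →ₗ[k] k => ⇑φ, fun f hf => Algebra.subset_adjoin hf, ?_⟩
  ext x
  simp only [Set.mem_singleton_iff, Set.mem_setOf_eq]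
  constructor
  · rintro rfl f ⟨φ, rfl⟩; simp
  · intro h
    exact (Module.forall_dual_apply_eq_zero_iff k x).mp fun φ => h ⇑φ ⟨φ, rfl⟩

theorem sum_pi_single_smul {k V : Type} [Field k] [AddCommGroup V] [Module k V]
    {q : ℕ} (j : Fin q) (u : Fin q → V) :
    ∑ i, (Pi.single j 1 : Fin q → k) i • u i = u j := by
  rw [Finset.sum_eq_single j]
  · simp
  · intro i _ hij
    rw [Pi.single_eq_of_ne hij, zero_smul]
  · simp

/-- If `Span{v₁,…,v_q} = Span{v₁,…,v_m}`, then the `G`-orbit of `(w,v₁,…,v_m)` is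
Zariski closed in `W ⊕ V^m` iff the `G`-orbit of `(w,v₁,…,v_q)` is Zariski closed in
`W ⊕ V^q`. -/
theorem orbit_closed_iff_truncated_orbit_closed
    {k G W V : Type} [Field k] [IsAlgClosed k] [Group G]
    [AddCommGroup W] [Module k W] [FiniteDimensional k W]
    [AddCommGroup V] [Module k V] [FiniteDimensional k V]
    [DistribMulAction G W] [SMulCommClass G k W]
    [DistribMulAction G V] [SMulCommClass G k V]
    {m q : ℕ} (hq : q ≤ m) (w : W) (v : Fin m → V)
    (hspan : Submodule.span k (Set.range fun i : Fin q => v (Fin.castLE hq i)) =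
      Submodule.span k (Set.range v)) :
    ZarClosed k (MulAction.orbit G ((w, v) : W × (Fin m → V))) ↔
      ZarClosed k (MulAction.orbit G ((w, fun i : Fin q => v (Fin.castLE hq i)) :
        W × (Fin q → V))) := by
  classical
  set vt : Fin q → V := fun i => v (Fin.castLE hq i) with hvt
  -- choose coefficients expressing each `v j` in terms of `vt`
  have hmem : ∀ j : Fin m, ∃ c : Fin q → k, ∑ i, c i • vt i = v j := by
    intro j
    have : v j ∈ Submodule.span k (Set.range vt) := by
      rw [hvt, hspan]
      exact Submodule.subset_span ⟨j, rfl⟩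
    exact (Submodule.mem_span_range_iff_exists_fun k).mp this
  set C : Fin m → Fin q → k := fun j =>
    if h : (j : ℕ) < q then Pi.single (⟨j, h⟩ : Fin q) 1 else Classical.choose (hmem j)
    with hCdef
  have hC : ∀ j : Fin m, ∑ i, C j i • vt i = v j := by
    intro j
    by_cases h : (j : ℕ) < q
    · simp only [hCdef, dif_pos h]
      rw [sum_pi_single_smul]
      simp [hvt, Fin.castLE]
    · simp only [hCdef, dif_neg h]
      exact Classical.choose_spec (hmem j)
  have hCδ : ∀ i₀ : Fin q, C (Fin.castLE hq i₀) = Pi.single i₀ 1 := by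
    intro i₀
    have h : ((Fin.castLE hq i₀ : Fin m) : ℕ) < q := i₀.isLt
    simp only [hCdef, dif_pos h]
    congr 1
  -- the truncation map and the lifting map
  set π : (W × (Fin m → V)) →ₗ[k] (W × (Fin q → V)) :=
    LinearMap.prodMap LinearMap.id (LinearMap.funLeft k V (Fin.castLE hq)) with hπ
  set L : (W × (Fin q → V)) →ₗ[k] (W × (Fin m → V)) :=
    LinearMap.prodMap LinearMap.id
      (LinearMap.pi fun j => ∑ i, C j i • LinearMap.proj i) with hL
  have hπapp : ∀ x : W × (Fin m → V), π x = (x.1, fun i => x.2 (Fin.castLE hq i)) := by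
    intro x; rfl
  have hLapp : ∀ x : W × (Fin q → V), L x = (x.1, fun j => ∑ i, C j i • x.2 i) := by
    intro x
    ext j
    · rfl
    · simp [hL, LinearMap.pi_apply, LinearMap.sum_apply,
        LinearMap.smul_apply, LinearMap.proj_apply]
  have hπL : ∀ x : W × (Fin q → V), π (L x) = x := by
    intro x
    rw [hLapp, hπapp]
    ext i
    · rfl
    · simp only
      rw [hCδ i]
      exact sum_pi_single_smul i x.2
  -- key equivariance facts
  have hsmul : ∀ (g : G), (g • ((w, vt) : W × (Fin q → V))) =
      (g • w, fun i => g • vt i) := fun g => rfl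
  have key : ∀ g : G, L (g • ((w, vt) : W × (Fin q → V))) = g • ((w, v) : W × (Fin m → V)) := by
    intro g
    rw [hsmul, hLapp]
    ext j
    · rfl
    · simp only
      calc ∑ i, C j i • g • vt i = g • ∑ i, C j i • vt i := by
            rw [Finset.smul_sum]
            exact Finset.sum_congr rfl fun i _ => (smul_comm g (C j i) (vt i)).symm
        _ = g • v j := by rw [hC j]
        _ = (g • ((w, v) : W × (Fin m → V))).2 j := rfl
  set N : (W × (Fin m → V)) →ₗ[k] (W × (Fin m → V)) := L.comp π - LinearMap.id with hN
  have hNapp : ∀ x, N x = L (π x) - x := fun x => rfl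
  have keyπ : ∀ g : G, π (g • ((w, v) : W × (Fin m → V))) =
      g • ((w, vt) : W × (Fin q → V)) := by
    intro g
    rw [hπapp]
    rfl
  constructor
  · -- full orbit closed → truncated orbit closed
    intro hfull
    have horb : MulAction.orbit G ((w, vt) : W × (Fin q → V)) =
        ⇑L ⁻¹' MulAction.orbit G ((w, v) : W × (Fin m → V)) := by
      ext y
      constructor
      · rintro ⟨g, rfl⟩
        exact ⟨g, (key g).symm⟩
      · rintro ⟨g, hg⟩
        refine ⟨g, ?_⟩
        have : y = π (L y) := (hπL y).symm
        rw [this, ← hg, keyπ g]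
    rw [hvt] at horb
    rw [horb]
    exact hfull.preimage_linear L
  · -- truncated orbit closed → full orbit closed
    intro htr
    have horb : MulAction.orbit G ((w, v) : W × (Fin m → V)) =
        (⇑π ⁻¹' MulAction.orbit G ((w, vt) : W × (Fin q → V))) ∩
          (⇑N ⁻¹' ({0} : Set (W × (Fin m → V)))) := by
      ext x
      constructor
      · rintro ⟨g, rfl⟩
        refine ⟨⟨g, (keyπ g).symm⟩, ?_⟩
        simp only [Set.mem_preimage, Set.mem_singleton_iff, hNapp, sub_eq_zero]
        rw [keyπ g, key g]
      · rintro ⟨⟨g, hg⟩, hx⟩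
        refine ⟨g, ?_⟩
        simp only [Set.mem_preimage, Set.mem_singleton_iff, hNapp, sub_eq_zero] at hx
        rw [← hx, ← hg, key g]
    rw [hvt] at htr
    rw [horb]
    exact (htr.preimage_linear π).inter
      (ZarClosed.singleton_zero.preimage_linear N)
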